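/- Let k ∈ ℕ, k ≥ 1, and define Φ(x) = (1/Γ(k/2)) ∫_0^{1/2} ((2s)^{k/2-1} / √(πs)) · (d^{k-1}/dx^{k-1})(e^{-x²/(4s)}) ds for x ∈ ℝ. Then there exists a constant C > 0 such that |Φ(x)| ≤ C e^{-x²/4} / √|x| for all x ∈ ℝ \ {0}; in particular Φ ∈ L¹(ℝ). -/

import Mathlib

open MeasureTheory Real Set Filter Topology

noncomputable section

/-- Modified Bessel function of the first kind of order `a`. -/
def besselI (a z : ℝ) : ℝ :=
  ∑' n : ℕ, (z / 2) ^ (2 * (n : ℝ) + a) / (Nat.factorial n * Real.Gamma ((n : ℝ) + a + 1))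

/-- The Laguerre heat kernel `W_t^α(x,y)`. -/
def laguerreHeat (a t x y : ℝ) : ℝ :=
  (2 * Real.exp (-t) / (1 - Real.exp (-2 * t))) ^ ((1 : ℝ) / 2) *
    (2 * x * y * Real.exp (-t) / (1 - Real.exp (-2 * t))) ^ ((1 : ℝ) / 2) *
    besselI a (2 * x * y * Real.exp (-t) / (1 - Real.exp (-2 * t))) *
    Real.exp (-((1 / 2) * (x ^ 2 + y ^ 2) * ((1 + Real.exp (-2 * t)) / (1 - Real.exp (-2 * t)))))

/-- The first-order Laguerre derivative operator `𝔇_α f = f' + (x - (α+1/2)/x) f`. -/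
def Dop (a : ℝ) (f : ℝ → ℝ) : ℝ → ℝ :=
  fun x => deriv f x + (x - (a + 1 / 2) / x) * f x

/-- The `k`-th Laguerre Riesz kernel `R_α^{(k)}(x,y)`. -/
def rieszKernelL (a : ℝ) (k : ℕ) (x y : ℝ) : ℝ :=
  (1 / Real.Gamma ((k : ℝ) / 2)) *
    ∫ t in Set.Ioi (0 : ℝ),
      t ^ ((k : ℝ) / 2 - 1) * ((Dop a)^[k] (fun u => laguerreHeat a t u y)) x

/-- The kernel `K_{α,k}(x,y)` of the negative power `L_α^{-k/2}`. -/
def laguerreK (a : ℝ) (k : ℕ) (x y : ℝ) : ℝ :=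
  (1 / Real.Gamma ((k : ℝ) / 2)) *
    ∫ t in Set.Ioi (0 : ℝ), t ^ ((k : ℝ) / 2 - 1) * laguerreHeat a t x y

/-- The negative power `L_α^{-k/2}` of the Laguerre operator, on test functions. -/
def Linv (a : ℝ) (k : ℕ) (φ : ℝ → ℝ) (x : ℝ) : ℝ :=
  ∫ y in Set.Ioi (0 : ℝ), laguerreK a k x y * φ y

/-- The Hermite heat kernel `W_t(x,y)`. -/
def hermiteHeat (t x y : ℝ) : ℝ :=
  (Real.exp (-t) / (1 - Real.exp (-2 * t))) ^ ((1 : ℝ) / 2) / Real.sqrt Real.pi *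
    Real.exp (-((1 / 2) * (x ^ 2 + y ^ 2) * ((1 + Real.exp (-2 * t)) / (1 - Real.exp (-2 * t)))) +
      2 * x * y * Real.exp (-t) / (1 - Real.exp (-2 * t)))

/-- The first-order Hermite derivative operator `f ↦ f' + x f`. -/
def Dh (f : ℝ → ℝ) : ℝ → ℝ := fun x => deriv f x + x * f x

/-- The `k`-th Hermite Riesz kernel `R^{(k)}(x,y)`. -/
def rieszKernelH (k : ℕ) (x y : ℝ) : ℝ :=
  (1 / Real.Gamma ((k : ℝ) / 2)) *
    ∫ t in Set.Ioi (0 : ℝ), t ^ ((k : ℝ) / 2 - 1) * (Dh^[k] (fun u => hermiteHeat t u y)) x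

/-- The intermediate Hermite kernel `R^{(k,l)}(x,y)`. -/
def rieszKernelHl (k l : ℕ) (x y : ℝ) : ℝ :=
  (1 / Real.Gamma ((k : ℝ) / 2)) *
    ∫ t in Set.Ioi (0 : ℝ), t ^ ((k : ℝ) / 2 - 1) * (Dh^[l] (fun u => hermiteHeat t u y)) x

/-- The kernel `K_k(x,y)` of the negative power `H^{-k/2}`. -/
def hermiteK (k : ℕ) (x y : ℝ) : ℝ :=
  (1 / Real.Gamma ((k : ℝ) / 2)) *
    ∫ t in Set.Ioi (0 : ℝ), t ^ ((k : ℝ) / 2 - 1) * hermiteHeat t x y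

/-- The negative power `H^{-k/2}` of the Hermite operator, on test functions. -/
def Hinv (k : ℕ) (φ : ℝ → ℝ) (x : ℝ) : ℝ := ∫ y, hermiteK k x y * φ y

/-- The measure on `(0,∞)` with density `x^δ` with respect to Lebesgue measure. -/
def weightedMeasure (δ : ℝ) : Measure ℝ :=
  (volume.restrict (Set.Ioi 0)).withDensity fun x => ENNReal.ofReal (x ^ δ)

/-- The constant `E_{N,l} = 2^{N-2l} N! / (l! (N-2l)!)`. -/
def Econst (N l : ℕ) : ℝ :=
  2 ^ (N - 2 * l) * Nat.factorial N / (Nat.factorial l * Nat.factorial (N - 2 * l))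

/-- The Hankel symbol `[b,r]`. -/
def hankel (b : ℝ) (r : ℕ) : ℝ :=
  (∏ i ∈ Finset.range r, (4 * b ^ 2 - (2 * (i : ℝ) + 1) ^ 2)) /
    (2 ^ (2 * r) * Nat.factorial r)

/-- The function `Φ` from the proof of the Hermite principal value result. -/
def Phi (k : ℕ) (x : ℝ) : ℝ :=
  (1 / Real.Gamma ((k : ℝ) / 2)) *
    ∫ s in Set.Ioo (0 : ℝ) (1 / 2),
      ((2 * s) ^ ((k : ℝ) / 2 - 1) / Real.sqrt (Real.pi * s)) *
        iteratedDeriv (k - 1) (fun u : ℝ => Real.exp (-u ^ 2 / (4 * s))) x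

end


section PhiAux
open Polynomial

/-- Representation of iterated derivatives of the Gaussian. -/
lemma gauss_iteratedDeriv (m : ℕ) : ∃ q : Polynomial ℝ,
    ∀ x : ℝ, iteratedDeriv m (fun u : ℝ => Real.exp (-u ^ 2 / 4)) x
      = q.eval x * Real.exp (-x ^ 2 / 4) := by
  induction m with
  | zero => exact ⟨1, fun x => by simp⟩
  | succ m ih =>
    obtain ⟨q, hq⟩ := ih
    refine ⟨derivative q - Polynomial.C (2⁻¹ : ℝ) * (Polynomial.X * q), fun x => ?_⟩
    rw [iteratedDeriv_succ, funext hq]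
    have h1 : HasDerivAt (fun x : ℝ => q.eval x * Real.exp (-x ^ 2 / 4))
        ((derivative q).eval x * Real.exp (-x ^ 2 / 4)
          + q.eval x * (-(x / 2) * Real.exp (-x ^ 2 / 4))) x := by
      have hexp : HasDerivAt (fun x : ℝ => Real.exp (-x ^ 2 / 4))
          (-(x / 2) * Real.exp (-x ^ 2 / 4)) x := by
        have hi : HasDerivAt (fun x : ℝ => -x ^ 2 / 4) (-(x / 2)) x := by
          have := ((hasDerivAt_pow 2 x).neg).div_const (4 : ℝ)
          exact this.congr_deriv (by rw [show (2:ℕ) - 1 = 1 from rfl]; push_cast; ring)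
        simpa [mul_comm] using hi.exp
      exact (q.hasDerivAt x).mul hexp
    rw [h1.deriv]
    simp only [eval_sub, eval_mul, eval_C, eval_X]
    ring

lemma sq_rpow_quarter (x : ℝ) : (x ^ 2 : ℝ) ^ ((1:ℝ)/4) = Real.sqrt |x| := by
  rw [← sq_abs, ← Real.rpow_natCast |x| 2, ← Real.rpow_mul (abs_nonneg x), Real.sqrt_eq_rpow]
  norm_num



lemma abs_pow_le (y : ℝ) (j : ℕ) :
    |y| ^ j ≤ Real.sqrt (32 ^ j * j.factorial) * Real.exp (y ^ 2 / 32) := by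
  have hb : (0:ℝ) ≤ Real.sqrt (32 ^ j * j.factorial) * Real.exp (y ^ 2 / 32) :=
    mul_nonneg (Real.sqrt_nonneg _) (Real.exp_nonneg _)
  have h0 : (0:ℝ) ≤ y ^ 2 / 32 := by positivity
  have h1 : (y ^ 2 / 32) ^ j / j.factorial ≤ Real.exp (y ^ 2 / 32) :=
    Real.pow_div_factorial_le_exp _ h0 j
  have h2 : (y ^ 2) ^ j ≤ 32 ^ j * j.factorial * Real.exp (y ^ 2 / 32) := by
    have := (div_le_iff₀ (by positivity : (0:ℝ) < (j.factorial : ℝ))).mp h1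
    calc (y ^ 2) ^ j = (y ^ 2 / 32) ^ j * 32 ^ j := by
          rw [div_pow]; field_simp
      _ ≤ (Real.exp (y ^ 2 / 32) * j.factorial) * 32 ^ j := by
          apply mul_le_mul_of_nonneg_right this (by positivity)
      _ = 32 ^ j * j.factorial * Real.exp (y ^ 2 / 32) := by ring
  have hsq : (|y| ^ j) ^ 2 ≤ (Real.sqrt (32 ^ j * j.factorial) * Real.exp (y ^ 2 / 32)) ^ 2 := by
    have e1 : (|y| ^ j) ^ 2 = (y ^ 2) ^ j := by
      rw [← pow_mul, mul_comm j 2, pow_mul, sq_abs]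
    have e2 : (Real.sqrt (32 ^ j * j.factorial) * Real.exp (y ^ 2 / 32)) ^ 2
        = (32 ^ j * j.factorial) * Real.exp (y ^ 2 / 32) ^ 2 := by
      rw [mul_pow, Real.sq_sqrt (by positivity)]
    rw [e1, e2]
    calc (y ^ 2) ^ j ≤ 32 ^ j * j.factorial * Real.exp (y ^ 2 / 32) := h2
      _ ≤ 32 ^ j * j.factorial * Real.exp (y ^ 2 / 32) ^ 2 := by
          apply mul_le_mul_of_nonneg_left _ (by positivity)
          nlinarith [Real.one_le_exp h0, Real.exp_nonneg (y^2/32)]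
  calc |y| ^ j = Real.sqrt ((|y| ^ j) ^ 2) := by rw [Real.sqrt_sq (by positivity)]
    _ ≤ Real.sqrt ((Real.sqrt (32 ^ j * j.factorial) * Real.exp (y ^ 2 / 32)) ^ 2) :=
        Real.sqrt_le_sqrt hsq
    _ = _ := Real.sqrt_sq hb

lemma poly_growth (q : Polynomial ℝ) : ∃ M : ℝ, 1 ≤ M ∧
    ∀ y : ℝ, |q.eval y| ≤ M * Real.exp (y ^ 2 / 32) := by
  refine ⟨1 + ∑ j ∈ Finset.range (q.natDegree + 1),
      |q.coeff j| * Real.sqrt (32 ^ j * j.factorial), ?_, fun y => ?_⟩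
  · have : (0:ℝ) ≤ ∑ j ∈ Finset.range (q.natDegree + 1),
        |q.coeff j| * Real.sqrt (32 ^ j * j.factorial) :=
      Finset.sum_nonneg fun j _ => mul_nonneg (abs_nonneg _) (Real.sqrt_nonneg _)
    linarith
  · have he : q.eval y = ∑ j ∈ Finset.range (q.natDegree + 1), q.coeff j * y ^ j :=
      q.eval_eq_sum_range y
    calc |q.eval y| ≤ ∑ j ∈ Finset.range (q.natDegree + 1), |q.coeff j * y ^ j| := by
          rw [he]; exact Finset.abs_sum_le_sum_abs _ _
      _ ≤ ∑ j ∈ Finset.range (q.natDegree + 1),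
            |q.coeff j| * (Real.sqrt (32 ^ j * j.factorial) * Real.exp (y ^ 2 / 32)) := by
          apply Finset.sum_le_sum
          intro j _
          rw [abs_mul, abs_pow]
          exact mul_le_mul_of_nonneg_left (abs_pow_le y j) (abs_nonneg _)
      _ = (∑ j ∈ Finset.range (q.natDegree + 1),
            |q.coeff j| * Real.sqrt (32 ^ j * j.factorial)) * Real.exp (y ^ 2 / 32) := by
          rw [Finset.sum_mul]; congr 1; ext j; ring
      _ ≤ _ := by
          have := Real.exp_nonneg (y ^ 2 / 32)
          nlinarith

lemma rpow_quarter_le_exp {t : ℝ} (ht : 0 < t) : t ^ ((1:ℝ)/4) ≤ Real.exp t := by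
  rcases le_total t 1 with h | h
  · calc t ^ ((1:ℝ)/4) ≤ 1 := Real.rpow_le_one ht.le h (by norm_num)
      _ ≤ Real.exp t := Real.one_le_exp ht.le
  · calc t ^ ((1:ℝ)/4) ≤ t ^ (1:ℝ) :=
        Real.rpow_le_rpow_of_exponent_le h (by norm_num)
      _ = t := Real.rpow_one t
      _ ≤ Real.exp t := by linarith [Real.add_one_le_exp t]

lemma key_s_bound {s b : ℝ} (hs : 0 < s) (hb : 0 < b) :
    s⁻¹ * Real.exp (-(b / s)) ≤ (2 / b) ^ ((1:ℝ)/4) * s ^ (-(3:ℝ)/4) := by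
  set t := b / (2 * s) with hts
  have ht : 0 < t := by positivity
  have h0 : t ≤ t ^ ((3:ℝ)/4) * Real.exp t := by
    calc t = t ^ ((3:ℝ)/4) * t ^ ((1:ℝ)/4) := by
          rw [← Real.rpow_add ht]; norm_num
      _ ≤ t ^ ((3:ℝ)/4) * Real.exp t :=
          mul_le_mul_of_nonneg_left (rpow_quarter_le_exp ht) (Real.rpow_nonneg ht.le _)
  have h1 : t * Real.exp (-t) ≤ t ^ ((3:ℝ)/4) := by
    calc t * Real.exp (-t) ≤ (t ^ ((3:ℝ)/4) * Real.exp t) * Real.exp (-t) :=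
          mul_le_mul_of_nonneg_right h0 (Real.exp_nonneg _)
      _ = t ^ ((3:ℝ)/4) := by rw [mul_assoc, ← Real.exp_add]; simp
  have h2 : Real.exp (-(b / s)) ≤ Real.exp (-t) := by
    apply Real.exp_le_exp.mpr
    rw [neg_le_neg_iff, hts]
    exact div_le_div_of_nonneg_left hb.le hs (by linarith)
  have hsinv : s⁻¹ = 2 / b * t := by
    rw [hts]; field_simp
  have h3 : s⁻¹ * Real.exp (-(b / s)) ≤ 2 / b * t ^ ((3:ℝ)/4) := by
    calc s⁻¹ * Real.exp (-(b / s)) ≤ s⁻¹ * Real.exp (-t) :=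
          mul_le_mul_of_nonneg_left h2 (by positivity)
      _ = 2 / b * (t * Real.exp (-t)) := by rw [hsinv]; ring
      _ ≤ 2 / b * t ^ ((3:ℝ)/4) := mul_le_mul_of_nonneg_left h1 (by positivity)
  refine h3.trans_eq ?_
  have htform : t = b / 2 * s⁻¹ := by rw [hts]; field_simp
  have hr : (0:ℝ) < 2 / b := by positivity
  rw [htform, Real.mul_rpow (by positivity) (by positivity)]
  rw [Real.inv_rpow hs.le, ← Real.rpow_neg hs.le]
  rw [show ((b:ℝ)/2) = (2/b)⁻¹ by field_simp]
  rw [Real.inv_rpow hr.le, ← Real.rpow_neg hr.le]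
  have : 2 / b * (2/b) ^ (-(3:ℝ)/4) = (2/b) ^ ((1:ℝ)/4) := by
    nth_rewrite 1 [← Real.rpow_one (2/b)]
    rw [← Real.rpow_add hr]; norm_num
  rw [show (-(3:ℝ)/4) = -((3:ℝ)/4) by norm_num] at this
  rw [← mul_assoc, this]
  norm_num

lemma gauss_scaled (m : ℕ) {s : ℝ} (hs : 0 < s) (x : ℝ) :
    iteratedDeriv m (fun u : ℝ => Real.exp (-u ^ 2 / (4 * s))) x
      = ((Real.sqrt s)⁻¹) ^ m *
        iteratedDeriv m (fun u : ℝ => Real.exp (-u ^ 2 / 4)) ((Real.sqrt s)⁻¹ * x) := by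
  have hsq : 0 < Real.sqrt s := Real.sqrt_pos.mpr hs
  have hc2 : ((Real.sqrt s)⁻¹) ^ 2 = s⁻¹ := by rw [inv_pow, Real.sq_sqrt hs.le]
  have hcd : ContDiff ℝ m (fun u : ℝ => Real.exp (-u ^ 2 / 4)) :=
    (((contDiff_id.pow 2).neg).div_const 4).exp
  have hfun : (fun u : ℝ => Real.exp (-u ^ 2 / (4 * s)))
      = fun u : ℝ => (fun v : ℝ => Real.exp (-v ^ 2 / 4)) ((Real.sqrt s)⁻¹ * u) := by
    funext u
    congr 1
    rw [mul_pow, hc2]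
    field_simp
  rw [hfun, iteratedDeriv_comp_const_mul hcd]

lemma integrand_bound (k : ℕ) (hk : 1 ≤ k) {q : Polynomial ℝ}
    (hq : ∀ x : ℝ, iteratedDeriv (k - 1) (fun u : ℝ => Real.exp (-u ^ 2 / 4)) x
      = q.eval x * Real.exp (-x ^ 2 / 4))
    {M : ℝ} (hM1 : 1 ≤ M) (hMq : ∀ y : ℝ, |q.eval y| ≤ M * Real.exp (y ^ 2 / 32))
    {x s : ℝ} (hx : x ≠ 0) (hs0 : 0 < s) (hs2 : s < 1 / 2) :
    |((2 * s) ^ ((k : ℝ) / 2 - 1) / Real.sqrt (Real.pi * s)) *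
        iteratedDeriv (k - 1) (fun u : ℝ => Real.exp (-u ^ 2 / (4 * s))) x|
      ≤ ((2:ℝ) ^ ((k : ℝ) / 2 - 1) / Real.sqrt Real.pi * M * 32 ^ ((1:ℝ)/4) *
          ((Real.sqrt |x|)⁻¹ * Real.exp (-x ^ 2 / 4))) * s ^ (-(3:ℝ)/4) := by
  have hsq : 0 < Real.sqrt s := Real.sqrt_pos.mpr hs0
  have hπ : (0:ℝ) < Real.sqrt Real.pi := Real.sqrt_pos.mpr pi_pos
  set c : ℝ := (Real.sqrt s)⁻¹ with hcdef
  have hc : 0 < c := inv_pos.mpr hsq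
  have hc2 : c ^ 2 = s⁻¹ := by rw [hcdef, inv_pow, Real.sq_sqrt hs0.le]
  set y : ℝ := c * x with hydef
  have hy2 : y ^ 2 = x ^ 2 / s := by rw [hydef, mul_pow, hc2]; ring
  have hx2 : (0:ℝ) < x ^ 2 := by positivity
  set A : ℝ := (2 * s) ^ ((k : ℝ) / 2 - 1) / Real.sqrt (Real.pi * s) with hAdef
  have hA0 : 0 ≤ A := div_nonneg (Real.rpow_nonneg (by linarith) _) (Real.sqrt_nonneg _)
  have hscale : iteratedDeriv (k - 1) (fun u : ℝ => Real.exp (-u ^ 2 / (4 * s))) x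
      = c ^ (k - 1) * (q.eval y * Real.exp (-y ^ 2 / 4)) := by
    rw [gauss_scaled (k - 1) hs0 x, hq]
  have hm : ((k - 1 : ℕ) : ℝ) = (k : ℝ) - 1 := by
    rw [Nat.cast_sub hk, Nat.cast_one]
  have hcm : c ^ (k - 1) = s ^ (-(1:ℝ)/2 * ((k:ℝ) - 1)) := by
    have h1 : c = s ^ (-(1:ℝ)/2) := by
      rw [hcdef, Real.sqrt_eq_rpow, ← Real.rpow_neg hs0.le]
      norm_num
    rw [h1, ← Real.rpow_natCast (s ^ (-(1:ℝ)/2)) (k-1), ← Real.rpow_mul hs0.le, hm]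
  have hs12 : (0:ℝ) < s ^ ((1:ℝ)/2) := Real.rpow_pos_of_pos hs0 _
  have key2 : s ^ ((k:ℝ)/2 - 1) * s ^ (-(1:ℝ)/2 * ((k:ℝ) - 1)) = s ^ ((1:ℝ)/2) * s⁻¹ := by
    rw [← Real.rpow_add hs0, ← Real.rpow_neg_one s, ← Real.rpow_add hs0]
    congr 1
    ring
  have hA : A * c ^ (k - 1) = (2:ℝ) ^ ((k : ℝ) / 2 - 1) / Real.sqrt Real.pi * s⁻¹ := by
    rw [hAdef, Real.mul_rpow (by norm_num) hs0.le, Real.sqrt_mul pi_pos.le,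
      Real.sqrt_eq_rpow s, hcm]
    rw [div_mul_eq_mul_div, mul_assoc, key2]
    field_simp
  have hQE : |q.eval y| * Real.exp (-y ^ 2 / 4)
      ≤ M * Real.exp (-x ^ 2 / 4) * Real.exp (-(x ^ 2 / 16 / s)) := by
    have h5 : x ^ 2 / 4 ≤ 5 / 32 * (x ^ 2 / s) := by
      have h6 : x ^ 2 / (1/2) ≤ x ^ 2 / s :=
        div_le_div_of_nonneg_left (sq_nonneg x) hs0 hs2.le
      linarith
    calc |q.eval y| * Real.exp (-y ^ 2 / 4)
        ≤ (M * Real.exp (y ^ 2 / 32)) * Real.exp (-y ^ 2 / 4) :=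
          mul_le_mul_of_nonneg_right (hMq y) (Real.exp_nonneg _)
      _ = M * Real.exp (y ^ 2 / 32 + -y ^ 2 / 4) := by rw [Real.exp_add]; ring
      _ ≤ M * Real.exp (-x ^ 2 / 4 + -(x ^ 2 / 16 / s)) := by
          apply mul_le_mul_of_nonneg_left _ (by linarith)
          apply Real.exp_le_exp.mpr
          rw [hy2]
          have e1 : x ^ 2 / 16 / s = (x ^ 2 / s) / 16 := by ring
          rw [e1]
          linarith
      _ = M * Real.exp (-x ^ 2 / 4) * Real.exp (-(x ^ 2 / 16 / s)) := by
          rw [Real.exp_add]; ring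
  have habs : |A * (c ^ (k - 1) * (q.eval y * Real.exp (-y ^ 2 / 4)))|
      = (A * c ^ (k - 1)) * (|q.eval y| * Real.exp (-y ^ 2 / 4)) := by
    rw [abs_mul, abs_mul, abs_mul, abs_of_nonneg hA0, abs_of_nonneg (pow_nonneg hc.le _),
      abs_of_nonneg (Real.exp_nonneg _)]
    ring
  have hb16 : (0:ℝ) < x ^ 2 / 16 := by positivity
  have hrw : ((2:ℝ) / (x ^ 2 / 16)) ^ ((1:ℝ)/4) = 32 ^ ((1:ℝ)/4) * (Real.sqrt |x|)⁻¹ := by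
    rw [show (2:ℝ) / (x ^ 2 / 16) = 32 / x ^ 2 by field_simp; ring,
      Real.div_rpow (by norm_num) (sq_nonneg x), sq_rpow_quarter, div_eq_mul_inv]
  calc |A * iteratedDeriv (k - 1) (fun u : ℝ => Real.exp (-u ^ 2 / (4 * s))) x|
      = (A * c ^ (k - 1)) * (|q.eval y| * Real.exp (-y ^ 2 / 4)) := by rw [hscale, habs]
    _ ≤ (A * c ^ (k - 1)) * (M * Real.exp (-x ^ 2 / 4) * Real.exp (-(x ^ 2 / 16 / s))) :=
        mul_le_mul_of_nonneg_left hQE (by positivity)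
    _ = ((2:ℝ) ^ ((k : ℝ) / 2 - 1) / Real.sqrt Real.pi) * (M * Real.exp (-x ^ 2 / 4)) *
          (s⁻¹ * Real.exp (-(x ^ 2 / 16 / s))) := by rw [hA]; ring
    _ ≤ ((2:ℝ) ^ ((k : ℝ) / 2 - 1) / Real.sqrt Real.pi) * (M * Real.exp (-x ^ 2 / 4)) *
          (((2:ℝ) / (x ^ 2 / 16)) ^ ((1:ℝ)/4) * s ^ (-(3:ℝ)/4)) := by
        apply mul_le_mul_of_nonneg_left (key_s_bound hs0 hb16) (by positivity)
    _ = _ := by rw [hrw]; ring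

end PhiAux

/-- pointwise bound for `Φ` and integrability. -/
theorem Phi_bound_and_integrable (k : ℕ) (hk : 1 ≤ k) :
    (∃ C : ℝ, 0 < C ∧ ∀ x : ℝ, x ≠ 0 →
      |Phi k x| ≤ C * Real.exp (-x ^ 2 / 4) / Real.sqrt |x|) ∧
    Integrable (Phi k) := by
  classical
  obtain ⟨q, hq⟩ := gauss_iteratedDeriv (k - 1)
  obtain ⟨M, hM1, hMq⟩ := poly_growth q
  have hkpos : (0:ℝ) < (k:ℝ) / 2 := by
    have : (1:ℝ) ≤ (k:ℝ) := by exact_mod_cast hk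
    linarith
  have hΓ : 0 < Real.Gamma ((k:ℝ) / 2) := Real.Gamma_pos_of_pos hkpos
  have hπ : (0:ℝ) < Real.sqrt Real.pi := Real.sqrt_pos.mpr pi_pos
  set Cb : ℝ := (2:ℝ) ^ ((k : ℝ) / 2 - 1) / Real.sqrt Real.pi * M * 32 ^ ((1:ℝ)/4)
    with hCbdef
  have hCb : 0 < Cb := by
    apply mul_pos (mul_pos (div_pos (Real.rpow_pos_of_pos two_pos _) hπ) (by linarith))
    exact Real.rpow_pos_of_pos (by norm_num) _
  set C : ℝ := 1 / Real.Gamma ((k:ℝ) / 2) * Cb * 4 with hCdef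
  have hC : 0 < C := by
    apply mul_pos (mul_pos _ hCb) (by norm_num)
    exact div_pos one_pos hΓ
  -- integrability and bound of s ^ (-3/4) on (0, 1/2)
  have hIntOn : IntegrableOn (fun s : ℝ => s ^ (-(3:ℝ)/4)) (Ioo (0:ℝ) (1/2)) :=
    (intervalIntegral.integrableOn_Ioo_rpow_iff (by norm_num)).mpr (by norm_num)
  have hval : ∫ s in Ioo (0:ℝ) (1/2), s ^ (-(3:ℝ)/4) ≤ 4 := by
    rw [← integral_Ioc_eq_integral_Ioo,
      ← intervalIntegral.integral_of_le (by norm_num : (0:ℝ) ≤ 1/2),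
      integral_rpow (Or.inl (by norm_num))]
    have h0 : (0:ℝ) ^ (-(3:ℝ)/4 + 1) = 0 := Real.zero_rpow (by norm_num)
    have h1 : ((1:ℝ)/2) ^ (-(3:ℝ)/4 + 1) ≤ 1 :=
      Real.rpow_le_one (by norm_num) (by norm_num) (by norm_num)
    rw [h0]
    rw [show (-(3:ℝ)/4 + 1) = (1:ℝ)/4 by norm_num] at h1 ⊢
    norm_num
    linarith
  -- the main pointwise bound
  have hbound : ∀ x : ℝ, x ≠ 0 →
      |Phi k x| ≤ C * Real.exp (-x ^ 2 / 4) / Real.sqrt |x| := by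
    intro x hx
    have hsx : 0 < Real.sqrt |x| := Real.sqrt_pos.mpr (abs_pos.mpr hx)
    have h1 : |Phi k x| = 1 / Real.Gamma ((k:ℝ) / 2) *
        |∫ s in Ioo (0:ℝ) (1/2),
          ((2 * s) ^ ((k : ℝ) / 2 - 1) / Real.sqrt (Real.pi * s)) *
            iteratedDeriv (k - 1) (fun u : ℝ => Real.exp (-u ^ 2 / (4 * s))) x| := by
      rw [Phi, abs_mul, abs_of_nonneg (by positivity : (0:ℝ) ≤ 1 / Real.Gamma ((k:ℝ)/2))]
    have h2 : |∫ s in Ioo (0:ℝ) (1/2),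
          ((2 * s) ^ ((k : ℝ) / 2 - 1) / Real.sqrt (Real.pi * s)) *
            iteratedDeriv (k - 1) (fun u : ℝ => Real.exp (-u ^ 2 / (4 * s))) x|
        ≤ Cb * ((Real.sqrt |x|)⁻¹ * Real.exp (-x ^ 2 / 4)) * 4 := by
      calc |∫ s in Ioo (0:ℝ) (1/2),
            ((2 * s) ^ ((k : ℝ) / 2 - 1) / Real.sqrt (Real.pi * s)) *
              iteratedDeriv (k - 1) (fun u : ℝ => Real.exp (-u ^ 2 / (4 * s))) x|
          ≤ ∫ s in Ioo (0:ℝ) (1/2),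
              |((2 * s) ^ ((k : ℝ) / 2 - 1) / Real.sqrt (Real.pi * s)) *
                iteratedDeriv (k - 1) (fun u : ℝ => Real.exp (-u ^ 2 / (4 * s))) x| := by
            simpa only [Real.norm_eq_abs] using
              norm_integral_le_integral_norm (μ := volume.restrict (Ioo (0:ℝ) (1/2)))
                (fun s => ((2 * s) ^ ((k : ℝ) / 2 - 1) / Real.sqrt (Real.pi * s)) *
                  iteratedDeriv (k - 1) (fun u : ℝ => Real.exp (-u ^ 2 / (4 * s))) x)
        _ ≤ ∫ s in Ioo (0:ℝ) (1/2),
              Cb * ((Real.sqrt |x|)⁻¹ * Real.exp (-x ^ 2 / 4)) * s ^ (-(3:ℝ)/4) := by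
            apply integral_mono_of_nonneg
            · exact Eventually.of_forall fun s => abs_nonneg _
            · exact (hIntOn.const_mul _)
            · rw [EventuallyLE, ae_restrict_iff' measurableSet_Ioo]
              refine Eventually.of_forall fun s hs => ?_
              rw [hCbdef]
              exact integrand_bound k hk hq hM1 hMq hx hs.1 hs.2
        _ = Cb * ((Real.sqrt |x|)⁻¹ * Real.exp (-x ^ 2 / 4)) *
              ∫ s in Ioo (0:ℝ) (1/2), s ^ (-(3:ℝ)/4) := integral_const_mul _ _
        _ ≤ Cb * ((Real.sqrt |x|)⁻¹ * Real.exp (-x ^ 2 / 4)) * 4 := by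
            apply mul_le_mul_of_nonneg_left hval (by positivity)
    calc |Phi k x| ≤ 1 / Real.Gamma ((k:ℝ) / 2) *
          (Cb * ((Real.sqrt |x|)⁻¹ * Real.exp (-x ^ 2 / 4)) * 4) := by
          rw [h1]
          exact mul_le_mul_of_nonneg_left h2 (by positivity)
      _ = C * Real.exp (-x ^ 2 / 4) / Real.sqrt |x| := by
          rw [hCdef]
          field_simp
  refine ⟨⟨C, hC, hbound⟩, ?_⟩
  -- measurability
  have hPhiEq : Phi k = fun x => (1 / Real.Gamma ((k:ℝ) / 2)) *
      ∫ s in Ioo (0:ℝ) (1/2),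
        (fun p : ℝ × ℝ =>
          (Real.exp (Real.log (2 * p.2) * ((k : ℝ) / 2 - 1)) / Real.sqrt (Real.pi * p.2)) *
            (((Real.sqrt p.2)⁻¹) ^ (k - 1) *
              (q.eval ((Real.sqrt p.2)⁻¹ * x) *
                Real.exp (-((Real.sqrt p.2)⁻¹ * x) ^ 2 / 4)))) (x, s) := by
    funext x
    rw [Phi]
    congr 1
    apply setIntegral_congr_fun measurableSet_Ioo
    intro s hs
    simp only
    rw [gauss_scaled (k - 1) hs.1 x, hq,
      Real.rpow_def_of_pos (by linarith [hs.1] : (0:ℝ) < 2 * s)]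
  have hGm : StronglyMeasurable (fun p : ℝ × ℝ =>
      (Real.exp (Real.log (2 * p.2) * ((k : ℝ) / 2 - 1)) / Real.sqrt (Real.pi * p.2)) *
        (((Real.sqrt p.2)⁻¹) ^ (k - 1) *
          (q.eval ((Real.sqrt p.2)⁻¹ * p.1) *
            Real.exp (-((Real.sqrt p.2)⁻¹ * p.1) ^ 2 / 4)))) := by
    apply Measurable.stronglyMeasurable
    have hsqrt : Measurable fun p : ℝ × ℝ => (Real.sqrt p.2)⁻¹ :=
      (Real.continuous_sqrt.measurable.comp measurable_snd).inv
    have m1 : Measurable fun p : ℝ × ℝ =>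
        Real.exp (Real.log (2 * p.2) * ((k : ℝ) / 2 - 1)) :=
      Real.measurable_exp.comp
        ((Real.measurable_log.comp (measurable_snd.const_mul 2)).mul_const _)
    have m2 : Measurable fun p : ℝ × ℝ => Real.sqrt (Real.pi * p.2) :=
      Real.continuous_sqrt.measurable.comp (measurable_snd.const_mul _)
    have m3 : Measurable fun p : ℝ × ℝ => ((Real.sqrt p.2)⁻¹) ^ (k - 1) :=
      hsqrt.pow_const _
    have m4 : Measurable fun p : ℝ × ℝ => (Real.sqrt p.2)⁻¹ * p.1 :=
      hsqrt.mul measurable_fst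
    have m5 : Measurable fun p : ℝ × ℝ => q.eval ((Real.sqrt p.2)⁻¹ * p.1) :=
      q.continuous.measurable.comp m4
    have m6 : Measurable fun p : ℝ × ℝ =>
        Real.exp (-((Real.sqrt p.2)⁻¹ * p.1) ^ 2 / 4) :=
      Real.measurable_exp.comp (((m4.pow_const 2).neg).div_const 4)
    exact (m1.div m2).mul (m3.mul (m5.mul m6))
  have hsm : AEStronglyMeasurable (Phi k) volume := by
    rw [hPhiEq]
    exact ((hGm.integral_prod_right').const_mul _).aestronglyMeasurable
  -- dominating function
  set g1 : ℝ → ℝ := (Ioo (0:ℝ) 1).indicator (fun x => x ^ (-(1:ℝ)/2)) with hg1def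
  have hg1 : Integrable g1 :=
    (((intervalIntegral.integrableOn_Ioo_rpow_iff one_pos).mpr (by norm_num)).integrable_indicator
      measurableSet_Ioo)
  have hg2 : Integrable (fun x => g1 (-x)) := hg1.comp_neg
  have hg3 : Integrable (fun x : ℝ => Real.exp (-x ^ 2 / 4)) := by
    have : (fun x : ℝ => Real.exp (-x ^ 2 / 4)) = fun x : ℝ => Real.exp (-(1/4 : ℝ) * x ^ 2) := by
      funext x; congr 1; ring
    rw [this]
    exact integrable_exp_neg_mul_sq (by norm_num)
  have hg : Integrable (fun x : ℝ =>
      C * (g1 x + g1 (-x) + Real.exp (-x ^ 2 / 4))) :=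
    ((hg1.add hg2).add hg3).const_mul C
  refine Integrable.mono' hg hsm ?_
  have hne : ∀ᵐ x : ℝ, x ≠ 0 := by
    refine ae_iff.mpr ?_
    simpa using measure_singleton (0:ℝ)
  filter_upwards [hne] with x hx
  rw [Real.norm_eq_abs]
  refine (hbound x hx).trans ?_
  have hsx : 0 < Real.sqrt |x| := Real.sqrt_pos.mpr (abs_pos.mpr hx)
  have hexp1 : Real.exp (-x ^ 2 / 4) ≤ 1 :=
    Real.exp_le_one_iff.mpr (by nlinarith [sq_nonneg x])
  have hg1nn : 0 ≤ g1 x :=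
    Set.indicator_nonneg (fun y hy => Real.rpow_nonneg hy.1.le _) x
  have hg1nn' : 0 ≤ g1 (-x) :=
    Set.indicator_nonneg (fun y hy => Real.rpow_nonneg hy.1.le _) (-x)
  have hexp0 : 0 ≤ Real.exp (-x ^ 2 / 4) := (Real.exp_pos _).le
  rcases le_or_gt 1 |x| with h | h
  · have hsq1 : 1 ≤ Real.sqrt |x| := by
      rw [show (1:ℝ) = Real.sqrt 1 by simp]
      exact Real.sqrt_le_sqrt h
    calc C * Real.exp (-x ^ 2 / 4) / Real.sqrt |x|
        ≤ C * Real.exp (-x ^ 2 / 4) / 1 :=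
          div_le_div_of_nonneg_left (by positivity) one_pos hsq1
      _ = C * Real.exp (-x ^ 2 / 4) := div_one _
      _ ≤ C * (g1 x + g1 (-x) + Real.exp (-x ^ 2 / 4)) := by
          apply mul_le_mul_of_nonneg_left _ hC.le
          linarith
  · have hinv : (Real.sqrt |x|)⁻¹ = |x| ^ (-(1:ℝ)/2) := by
      rw [Real.sqrt_eq_rpow, ← Real.rpow_neg (abs_nonneg x)]
      norm_num
    have step1 : C * Real.exp (-x ^ 2 / 4) / Real.sqrt |x| ≤ C * |x| ^ (-(1:ℝ)/2) := by
      rw [div_eq_mul_inv, hinv]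
      calc C * Real.exp (-x ^ 2 / 4) * |x| ^ (-(1:ℝ)/2)
          ≤ C * 1 * |x| ^ (-(1:ℝ)/2) :=
            mul_le_mul_of_nonneg_right (mul_le_mul_of_nonneg_left hexp1 hC.le)
              (Real.rpow_nonneg (abs_nonneg x) _)
        _ = C * |x| ^ (-(1:ℝ)/2) := by ring
    refine step1.trans ?_
    have step2 : |x| ^ (-(1:ℝ)/2) ≤ g1 x + g1 (-x) + Real.exp (-x ^ 2 / 4) := by
      rcases hx.lt_or_gt with hneg | hpos
      · have hmem : -x ∈ Ioo (0:ℝ) 1 := by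
          constructor
          · linarith
          · rw [abs_of_neg hneg] at h; linarith
        have hval2 : g1 (-x) = (-x) ^ (-(1:ℝ)/2) := Set.indicator_of_mem hmem _
        rw [abs_of_neg hneg, hval2]
        linarith
      · have hmem : x ∈ Ioo (0:ℝ) 1 := by
          constructor
          · exact hpos
          · rw [abs_of_pos hpos] at h; linarith
        have hval2 : g1 x = x ^ (-(1:ℝ)/2) := Set.indicator_of_mem hmem _
        rw [abs_of_pos hpos, hval2]
        linarith
    exact mul_le_mul_of_nonneg_left step2 hC.le
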